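/- Let q be a nonzero noncommutative polynomial in ℂ⟨X₁, …, Xₙ⟩ with zero coefficient at the empty word, let m_q be the number of words with nonzero coefficient in q, and let d be the degree of q (the maximal length of such a word). Then there exist a natural number N with 2 ≤ N ≤ 2·m_q·d + 2·m_q and a monoid homomorphism μ : F(X) → M_N(ℂ[z]) such that for every nonempty word F, μ(F)_{1,N} = Σ_{k=1}^{|F|} ⟨q^k⟩_F · z^k, where ⟨q^k⟩_F denotes the coefficient of the word F in the k-th power q^k. -/

import Mathlib

open scoped BigOperators
open Finset Polynomial FreeMonoid


lemma MA_add_apply {n : ℕ} (f g : MonoidAlgebra ℂ (FreeMonoid (Fin n)))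
    (w : FreeMonoid (Fin n)) : (f + g).coeff w = f.coeff w + g.coeff w := rfl

lemma mul_apply_splits' {n : ℕ} (f g : MonoidAlgebra ℂ (FreeMonoid (Fin n)))
    (F : FreeMonoid (Fin n)) :
    (f * g).coeff F = ∑ i ∈ Finset.range (F.toList.length + 1),
      f.coeff (FreeMonoid.ofList (F.toList.take i)) * g.coeff (FreeMonoid.ofList (F.toList.drop i)) := by
  classical
  induction f using MonoidAlgebra.induction_linear with
  | zero => simp
  | add f₁ f₂ h1 h2 =>
      rw [add_mul]
      rw [MA_add_apply, h1, h2, ← Finset.sum_add_distrib]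
      refine Finset.sum_congr rfl fun i _ => ?_
      rw [MA_add_apply, add_mul]
  | single a c =>
      induction g using MonoidAlgebra.induction_linear with
      | zero => simp
      | add g₁ g₂ h1 h2 =>
          rw [mul_add]
          rw [MA_add_apply, h1, h2, ← Finset.sum_add_distrib]
          refine Finset.sum_congr rfl fun i _ => ?_
          rw [MA_add_apply, mul_add]
      | single b e =>
          rw [MonoidAlgebra.single_mul_single]
          show (MonoidAlgebra.single (a * b) (c * e)).coeff F = _
          rw [MonoidAlgebra.coeff_single_apply]
          have key : ∀ i ∈ Finset.range (F.toList.length + 1), i ≠ a.toList.length →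
              (MonoidAlgebra.single a c : MonoidAlgebra ℂ (FreeMonoid (Fin n))).coeff
                  (FreeMonoid.ofList (F.toList.take i)) *
                (MonoidAlgebra.single b e : MonoidAlgebra ℂ (FreeMonoid (Fin n))).coeff
                  (FreeMonoid.ofList (F.toList.drop i)) = 0 := by
            intro i hi hne
            simp only [Finset.mem_range] at hi
            rw [MonoidAlgebra.coeff_single_apply]
            rw [if_neg, zero_mul]
            intro h
            apply hne
            have := congrArg (fun w => (FreeMonoid.toList w).length) h
            simp only [FreeMonoid.toList_ofList] at this
            rw [List.length_take] at this
            omega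
          by_cases h : a * b = F
          · rw [if_pos h]
            rw [Finset.sum_eq_single_of_mem a.toList.length _ key]
            · have hF : F.toList = a.toList ++ b.toList := by
                rw [← h]; exact FreeMonoid.toList_mul a b
              rw [hF, List.take_left, List.drop_left]
              simp [Finsupp.single_apply, FreeMonoid.ofList_toList]
            · simp only [Finset.mem_range]
              have hF : F.toList = a.toList ++ b.toList := by
                rw [← h]; exact FreeMonoid.toList_mul a b
              rw [hF, List.length_append]; omega
          · rw [if_neg h]
            refine (Finset.sum_eq_zero fun i hi => ?_).symm
            rw [MonoidAlgebra.coeff_single_apply, MonoidAlgebra.coeff_single_apply]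
            by_cases h1 : a = FreeMonoid.ofList (F.toList.take i)
            · rw [if_pos h1]
              by_cases h2 : b = FreeMonoid.ofList (F.toList.drop i)
              · exfalso; apply h
                rw [h1, h2]
                apply FreeMonoid.toList.injective
                simp [FreeMonoid.toList_mul]
              · rw [if_neg h2, mul_zero]
            · rw [if_neg h1, zero_mul]

instance freeMonoidDecEq {α : Type*} [DecidableEq α] : DecidableEq (FreeMonoid α) :=
  fun a b => decidable_of_iff (a.toList = b.toList) FreeMonoid.toList.injective.eq_iff

section
variable {n : ℕ}

lemma pow_vanish (q : MonoidAlgebra ℂ (FreeMonoid (Fin n))) (hqe : q.coeff 1 = 0) :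
    ∀ k (F : FreeMonoid (Fin n)), F.toList.length < k → (q ^ k).coeff F = 0 := by
  intro k
  induction k with
  | zero => intro F h; omega
  | succ k ih =>
      intro F h
      rw [pow_succ, mul_apply_splits']
      apply Finset.sum_eq_zero
      intro i hi
      simp only [Finset.mem_range] at hi
      rcases lt_or_ge i F.toList.length with hlt | hge
      · have h1 : ((ofList (F.toList.take i) : FreeMonoid (Fin n))).toList.length < k := by
          rw [toList_ofList, List.length_take]; omega
        rw [ih _ h1, zero_mul]
      · have hnil : F.toList.drop i = [] := List.drop_eq_nil_of_le hge
        rw [hnil]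
        have h2 : (ofList ([] : List (Fin n))) = (1 : FreeMonoid (Fin n)) := rfl
        rw [h2, hqe, mul_zero]

lemma pow_zero_apply (q : MonoidAlgebra ℂ (FreeMonoid (Fin n))) (F : FreeMonoid (Fin n)) :
    (q ^ 0).coeff F = if F = 1 then 1 else 0 := by
  rw [pow_zero, MonoidAlgebra.one_def, MonoidAlgebra.coeff_single_apply]
  by_cases h : F = 1 <;> simp [h, eq_comm]

/-- the entry weight -/
noncomputable def cf (q : MonoidAlgebra ℂ (FreeMonoid (Fin n))) (r : FreeMonoid (Fin n)) :
    Polynomial ℂ := Polynomial.C (q.coeff r) * Polynomial.X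

/-- coefficient-with-z of `q^k` -/
noncomputable def Tk (q : MonoidAlgebra ℂ (FreeMonoid (Fin n))) (k : ℕ) (F : FreeMonoid (Fin n)) :
    Polynomial ℂ := Polynomial.C ((q ^ k).coeff F) * Polynomial.X ^ k

/-- state space -/
abbrev St (P : Finset (FreeMonoid (Fin n))) : Type := Unit ⊕ ({u // u ∈ P} ⊕ Unit)

/-- transition matrix for letter x -/
noncomputable def Mx (q : MonoidAlgebra ℂ (FreeMonoid (Fin n)))
    (P : Finset (FreeMonoid (Fin n))) (x : Fin n) :
    Matrix (St P) (St P) (Polynomial ℂ) := fun s s' =>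
  match s, s' with
  | Sum.inl _, Sum.inl _ => 0
  | Sum.inl _, Sum.inr (Sum.inl u) => cf q (of x * u.1)
  | Sum.inl _, Sum.inr (Sum.inr _) => cf q (of x)
  | Sum.inr (Sum.inl _), Sum.inl _ => 0
  | Sum.inr (Sum.inl u), Sum.inr (Sum.inl u') => if u.1 = of x * u'.1 then 1 else 0
  | Sum.inr (Sum.inl u), Sum.inr (Sum.inr _) => if u.1 = of x then 1 else 0
  | Sum.inr (Sum.inr _), Sum.inl _ => 0
  | Sum.inr (Sum.inr _), Sum.inr (Sum.inl u) => cf q (of x * u.1)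
  | Sum.inr (Sum.inr _), Sum.inr (Sum.inr _) => cf q (of x)

/-- invariant row vector -/
noncomputable def VS (q : MonoidAlgebra ℂ (FreeMonoid (Fin n)))
    (P : Finset (FreeMonoid (Fin n))) (F : FreeMonoid (Fin n)) : St P → Polynomial ℂ
  | Sum.inl _ => if F = 1 then 1 else 0
  | Sum.inr (Sum.inl u) => ∑ k ∈ range F.toList.length, ∑ i ∈ range F.toList.length,
      Tk q k (ofList (F.toList.take i)) * cf q (ofList (F.toList.drop i) * u.1)
  | Sum.inr (Sum.inr _) => ∑ k ∈ Icc 1 F.toList.length, Tk q k F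

lemma sum_subtype_ite (P : Finset (FreeMonoid (Fin n))) (φ : FreeMonoid (Fin n) → Polynomial ℂ)
    (w : FreeMonoid (Fin n)) :
    (∑ u' : {u // u ∈ P}, φ u'.1 * (if u'.1 = w then 1 else 0)) = if w ∈ P then φ w else 0 := by
  rw [Finset.sum_coe_sort P (fun u => φ u * (if u = w then 1 else 0))]
  simp only [mul_ite, mul_one, mul_zero]
  rw [Finset.sum_ite_eq' P w φ]

/-- dead-sum lemma: if `u ∉ P` then the u-component formula is 0 -/
lemma dz (q : MonoidAlgebra ℂ (FreeMonoid (Fin n))) (P : Finset (FreeMonoid (Fin n)))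
    (hP : ∀ r u : FreeMonoid (Fin n), r ≠ 1 → r * u ∈ q.coeff.support → u ∈ P)
    (u : FreeMonoid (Fin n)) (hu : u ∉ P) (l : List (Fin n)) :
    ∑ k ∈ range l.length, ∑ i ∈ range l.length,
      Tk q k (ofList (l.take i)) * cf q (ofList (l.drop i) * u) = 0 := by
  apply Finset.sum_eq_zero; intro k _
  apply Finset.sum_eq_zero; intro i hi
  simp only [Finset.mem_range] at hi
  have hr : (ofList (l.drop i) : FreeMonoid (Fin n)) ≠ 1 := by
    intro h
    have := congrArg FreeMonoid.toList h
    rw [toList_ofList, toList_one] at this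
    have : l.length - i = 0 := by rw [← List.length_drop, this]; rfl
    omega
  have hq0 : q.coeff (ofList (l.drop i) * u) = 0 := by
    by_contra hne
    exact hu (hP _ u hr (Finsupp.mem_support_iff.mpr hne))
  rw [cf, hq0, map_zero, zero_mul, mul_zero]
end

section
variable {n : ℕ} (q : MonoidAlgebra ℂ (FreeMonoid (Fin n)))

lemma lemE (hqe : q.coeff 1 = 0) (l : List (Fin n)) (x : Fin n) (j : ℕ) :
    (q ^ (j + 1)).coeff (ofList (l ++ [x])) =
      (∑ i ∈ range l.length, (q ^ j).coeff (ofList (l.take i)) * q.coeff (ofList (l.drop i) * of x))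
        + (q ^ j).coeff (ofList l) * q.coeff (of x) := by
  rw [pow_succ, mul_apply_splits']
  rw [toList_ofList, List.length_append, List.length_singleton]
  rw [Finset.sum_range_succ, Finset.sum_range_succ]
  have hdrop_last : (l ++ [x]).drop (l.length + 1) = [] :=
    List.drop_eq_nil_of_le (by simp)
  rw [hdrop_last]
  have h1 : (ofList ([] : List (Fin n))) = (1 : FreeMonoid (Fin n)) := rfl
  rw [h1, hqe, mul_zero, add_zero]
  have htake : (l ++ [x]).take l.length = l := List.take_left
  have hdrop : (l ++ [x]).drop l.length = [x] := List.drop_left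
  rw [htake, hdrop]
  have h2 : (ofList [x] : FreeMonoid (Fin n)) = of x := ofList_singleton x
  rw [h2]
  congr 1
  apply Finset.sum_congr rfl
  intro i hi
  simp only [Finset.mem_range] at hi
  rw [List.take_append_of_le_length (le_of_lt hi), List.drop_append_of_le_length (le_of_lt hi),
    ofList_append, h2]

lemma lemA (hqe : q.coeff 1 = 0) (l : List (Fin n)) (hl : l ≠ []) (x : Fin n) :
    ∑ k ∈ Icc 1 (l.length + 1), Tk q k (ofList (l ++ [x]))
      = (∑ k ∈ range l.length, ∑ i ∈ range l.length,
          Tk q k (ofList (l.take i)) * cf q (ofList (l.drop i) * of x))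
        + (∑ k ∈ Icc 1 l.length, Tk q k (ofList l)) * cf q (of x) := by
  rw [← Finset.Ico_add_one_right_eq_Icc, Finset.sum_Ico_eq_sum_range]
  simp only [Nat.add_sub_cancel]
  have step : ∀ j, Tk q (1 + j) (ofList (l ++ [x])) =
      (∑ i ∈ range l.length, Tk q j (ofList (l.take i)) * cf q (ofList (l.drop i) * of x))
        + Tk q j (ofList l) * cf q (of x) := by
    intro j
    rw [Tk, add_comm 1 j, lemE q hqe l x j, map_add, add_mul, map_sum, Finset.sum_mul]
    congr 1
    · apply Finset.sum_congr rfl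
      intro i _
      rw [Tk, cf, map_mul]
      ring
    · rw [Tk, cf, map_mul]; ring
  rw [Finset.sum_congr rfl (fun j _ => step j)]
  rw [Finset.sum_add_distrib]
  -- first part: drop the j = length term which vanishes
  rw [Finset.sum_range_succ]
  have hvan : ∑ i ∈ range l.length,
      Tk q l.length (ofList (l.take i)) * cf q (ofList (l.drop i) * of x) = 0 := by
    apply Finset.sum_eq_zero
    intro i hi
    simp only [Finset.mem_range] at hi
    have : (q ^ l.length).coeff (ofList (l.take i)) = 0 := by
      apply pow_vanish q hqe
      rw [toList_ofList, List.length_take]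
      omega
    rw [Tk, this, map_zero, zero_mul, zero_mul]
  rw [hvan, add_zero]
  congr 1
  -- second part
  rw [Finset.sum_range_succ']
  have h0 : Tk q 0 (ofList l) * cf q (of x) = 0 := by
    rw [Tk, pow_zero_apply]
    rw [if_neg, map_zero, zero_mul, zero_mul]
    intro h
    apply hl
    have := congrArg FreeMonoid.toList h
    rwa [toList_ofList, toList_one] at this
  rw [h0, add_zero]
  rw [← Finset.Ico_add_one_right_eq_Icc, Finset.sum_Ico_eq_sum_range]
  simp only [Nat.add_sub_cancel]
  rw [Finset.sum_mul]
  apply Finset.sum_congr rfl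
  intro j _
  rw [add_comm 1 j]

lemma lemB (hqe : q.coeff 1 = 0) (l : List (Fin n)) (hl : l ≠ []) (x : Fin n)
    (u : FreeMonoid (Fin n)) :
    ∑ k ∈ range (l.length + 1), ∑ i ∈ range (l.length + 1),
        Tk q k (ofList ((l ++ [x]).take i)) * cf q (ofList ((l ++ [x]).drop i) * u)
      = (∑ k ∈ range l.length, ∑ i ∈ range l.length,
          Tk q k (ofList (l.take i)) * cf q (ofList (l.drop i) * (of x * u)))
        + (∑ k ∈ Icc 1 l.length, Tk q k (ofList l)) * cf q (of x * u) := by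
  have inner : ∀ k, ∑ i ∈ range (l.length + 1),
      Tk q k (ofList ((l ++ [x]).take i)) * cf q (ofList ((l ++ [x]).drop i) * u)
      = (∑ i ∈ range l.length,
          Tk q k (ofList (l.take i)) * cf q (ofList (l.drop i) * (of x * u)))
        + Tk q k (ofList l) * cf q (of x * u) := by
    intro k
    rw [Finset.sum_range_succ]
    congr 1
    · apply Finset.sum_congr rfl
      intro i hi
      simp only [Finset.mem_range] at hi
      rw [List.take_append_of_le_length (le_of_lt hi),
        List.drop_append_of_le_length (le_of_lt hi)]
      rw [ofList_append, ofList_singleton, mul_assoc]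
    · rw [List.take_left, List.drop_left, ofList_singleton]
  rw [Finset.sum_congr rfl (fun k _ => inner k), Finset.sum_add_distrib]
  congr 1
  · -- drop k = length term
    rw [Finset.sum_range_succ]
    have hvan : ∑ i ∈ range l.length,
        Tk q l.length (ofList (l.take i)) * cf q (ofList (l.drop i) * (of x * u)) = 0 := by
      apply Finset.sum_eq_zero
      intro i hi
      simp only [Finset.mem_range] at hi
      have : (q ^ l.length).coeff (ofList (l.take i)) = 0 := by
        apply pow_vanish q hqe
        rw [toList_ofList, List.length_take]
        omega
      rw [Tk, this, map_zero, zero_mul, zero_mul]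
    rw [hvan, add_zero]
  · rw [Finset.sum_range_succ']
    have h0 : Tk q 0 (ofList l) * cf q (of x * u) = 0 := by
      rw [Tk, pow_zero_apply]
      rw [if_neg, map_zero, zero_mul, zero_mul]
      intro h
      apply hl
      have := congrArg FreeMonoid.toList h
      rwa [toList_ofList, toList_one] at this
    rw [h0, add_zero, Finset.sum_mul, ← Finset.Ico_add_one_right_eq_Icc, Finset.sum_Ico_eq_sum_range]
    simp only [Nat.add_sub_cancel]
    apply Finset.sum_congr rfl
    intro j _
    rw [add_comm 1 j]
end

section
variable {n : ℕ}

lemma row_eq (q : MonoidAlgebra ℂ (FreeMonoid (Fin n))) (hqe : q.coeff 1 = 0)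
    (P : Finset (FreeMonoid (Fin n)))
    (hP : ∀ r u : FreeMonoid (Fin n), r ≠ 1 → r * u ∈ q.coeff.support → u ∈ P) :
    ∀ (l : List (Fin n)) (s' : St P),
      FreeMonoid.lift (Mx q P) (ofList l) (Sum.inl ()) s' = VS q P (ofList l) s' := by
  intro l
  induction l using List.reverseRecOn with
  | nil =>
      intro s'
      have h1 : (ofList ([] : List (Fin n))) = 1 := rfl
      rw [h1, map_one]
      cases s' with
      | inl a => rw [Matrix.one_apply_eq]; simp [VS]
      | inr s2 =>
          cases s2 with
          | inl u =>
              rw [Matrix.one_apply_ne (by simp)]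
              simp [VS]
          | inr b =>
              rw [Matrix.one_apply_ne (by simp)]
              simp [VS]
  | append_singleton l x ih =>
      intro s'
      have hsplit : (ofList (l ++ [x]) : FreeMonoid (Fin n)) = ofList l * of x := by
        rw [ofList_append, ofList_singleton]
      rw [hsplit, map_mul, Matrix.mul_apply]
      have hlift : (FreeMonoid.lift (Mx q P)) (of x) = Mx q P x := FreeMonoid.lift_eval_of _ x
      simp only [hlift, ih]
      rw [Fintype.sum_sum_type, Fintype.sum_sum_type]
      simp only [Finset.univ_unique, Finset.sum_singleton]
      rcases eq_or_ne l [] with rfl | hl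
      · -- base case: l = []
        have h1 : (ofList ([] : List (Fin n))) = 1 := rfl
        rw [h1, one_mul]
        have hIcc : (Icc 1 0 : Finset ℕ) = ∅ := rfl
        simp only [VS, toList_one, List.length_nil, Finset.range_zero, Finset.sum_empty, hIcc,
          if_pos rfl, one_mul, zero_mul, Finset.sum_const_zero, add_zero, zero_add]
        have hofx : (of x : FreeMonoid (Fin n)) ≠ 1 := by
          intro h
          have := congrArg FreeMonoid.toList h
          rw [toList_of, toList_one] at this
          simp at this
        cases s' with
        | inl a =>
            simp only [Mx, VS]
            rw [if_neg hofx]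
            simp
        | inr s2 =>
            cases s2 with
            | inl u =>
                simp only [Mx, VS, toList_of, List.length_singleton, Finset.sum_range_one,
                  List.take_zero, List.drop_zero]
                rw [Tk, pow_zero_apply]
                have : (ofList ([] : List (Fin n))) = (1 : FreeMonoid (Fin n)) := rfl
                rw [this, if_pos rfl, pow_zero, map_one, one_mul, one_mul, ofList_singleton]
                simp
            | inr b =>
                simp only [Mx, VS, toList_of, List.length_singleton, Finset.Icc_self,
                  Finset.sum_singleton, Tk, cf, pow_one]
                simp
      · -- inductive case: l ≠ []
        have hF1 : (ofList l : FreeMonoid (Fin n)) ≠ 1 := by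
          intro h
          apply hl
          have := congrArg FreeMonoid.toList h
          rwa [toList_ofList, toList_one] at this
        have hFx1 : (ofList l * of x : FreeMonoid (Fin n)) ≠ 1 := by
          intro h
          have := congrArg FreeMonoid.toList h
          rw [← hsplit, toList_ofList, toList_one] at this
          simp at this
        rw [show VS q P (ofList l) (Sum.inl default) = 0 from by
          simp only [VS]; rw [if_neg hF1]]
        rw [zero_mul, zero_add]
        cases s' with
        | inl a =>
            simp only [Mx, VS, mul_zero, Finset.sum_const_zero, add_zero, zero_add]
            rw [if_neg hFx1]
        | inr s2 =>
            cases s2 with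
            | inl u =>
                simp only [Mx, VS, toList_ofList]
                rw [sum_subtype_ite P
                  (fun w => ∑ k ∈ range l.length, ∑ i ∈ range l.length,
                    Tk q k (ofList (l.take i)) * cf q (ofList (l.drop i) * w)) (of x * u.1)]
                rw [← hsplit, toList_ofList, List.length_append, List.length_singleton]
                rw [lemB q hqe l hl x u.1]
                by_cases hmem : of x * u.1 ∈ P
                · rw [if_pos hmem]
                · rw [if_neg hmem, dz q P hP _ hmem l, zero_add]
            | inr b =>
                simp only [Mx, VS, toList_ofList]
                rw [sum_subtype_ite P
                  (fun w => ∑ k ∈ range l.length, ∑ i ∈ range l.length,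
                    Tk q k (ofList (l.take i)) * cf q (ofList (l.drop i) * w)) (of x)]
                rw [← hsplit, toList_ofList, List.length_append, List.length_singleton]
                rw [lemA q hqe l hl x]
                by_cases hmem : of x ∈ P
                · rw [if_pos hmem]
                · rw [if_neg hmem, dz q P hP _ hmem l, zero_add]
end


/-- For a nonzero noncommutative polynomial `q ∈ ℂ⟨X₁,…,Xₙ⟩` with zero constant
coefficient, with `m_q` words with nonzero coefficient and degree `d`, there is a monoid
homomorphism `μ : F(X) → M_N(ℂ[z])` of some size `2 ≤ N ≤ 2·m_q·d + 2·m_q` recognizing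
the pseudo-inverse series `(zq)* = Σ_{k ≥ 1} (zq)^k`, i.e. for every nonempty word `F`,
`μ(F)_{1,N} = Σ_{k=1}^{|F|} ⟨q^k⟩_F · z^k`. -/
theorem star_zq_recognized_small {n : ℕ}
    (q : MonoidAlgebra ℂ (FreeMonoid (Fin n)))
    (hq : q ≠ 0) (hqe : q.coeff (1 : FreeMonoid (Fin n)) = 0) :
    ∃ (N : ℕ) (hN : 2 ≤ N),
      N ≤ 2 * q.coeff.support.card * (q.coeff.support.sup fun W => (FreeMonoid.toList W).length)
            + 2 * q.coeff.support.card ∧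
      ∃ μ : FreeMonoid (Fin n) →* Matrix (Fin N) (Fin N) (Polynomial ℂ),
        ∀ F : FreeMonoid (Fin n), F ≠ 1 →
          μ F ⟨0, by omega⟩ ⟨N - 1, by omega⟩ =
            ∑ k ∈ Finset.Icc 1 (FreeMonoid.toList F).length,
              Polynomial.C ((q ^ k).coeff F) * Polynomial.X ^ k := by
  classical
  set m := q.coeff.support.card with hmdef
  set d := q.coeff.support.sup fun W => (FreeMonoid.toList W).length with hddef
  set P : Finset (FreeMonoid (Fin n)) := q.coeff.support.biUnion
    (fun W => ((W.toList.tails).map (FreeMonoid.ofList : List (Fin n) → FreeMonoid (Fin n))).toFinset)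
    with hPdef
  have hP : ∀ r u : FreeMonoid (Fin n), r ≠ 1 → r * u ∈ q.coeff.support → u ∈ P := by
    intro r u _ hm
    apply Finset.mem_biUnion.mpr
    refine ⟨r * u, hm, ?_⟩
    rw [List.mem_toFinset, List.mem_map]
    refine ⟨u.toList, ?_, ofList_toList u⟩
    rw [List.mem_tails, toList_mul]
    exact List.suffix_append _ _
  have hm1 : 1 ≤ m := Finset.card_pos.mpr (Finsupp.support_nonempty_iff.mpr (mt MonoidAlgebra.coeff_eq_zero.mp hq))
  have hd1 : 1 ≤ d := by
    obtain ⟨W, hW⟩ := Finsupp.support_nonempty_iff.mpr (mt MonoidAlgebra.coeff_eq_zero.mp hq)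
    have hW1 : W ≠ 1 := by
      intro h; rw [h] at hW; exact (Finsupp.mem_support_iff.mp hW) hqe
    have hlen : 1 ≤ W.toList.length := by
      rcases Nat.eq_zero_or_pos W.toList.length with h0 | h1
      · exfalso; apply hW1
        have : W.toList = [] := List.length_eq_zero_iff.mp h0
        have := congrArg FreeMonoid.ofList this
        rwa [ofList_toList] at this
      · exact h1
    exact le_trans hlen (Finset.le_sup hW)
  have hPcard : P.card ≤ m * (d + 1) := by
    calc P.card ≤ ∑ W ∈ q.coeff.support, (((W.toList.tails).map
          (FreeMonoid.ofList : List (Fin n) → FreeMonoid (Fin n))).toFinset).card :=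
          Finset.card_biUnion_le
      _ ≤ ∑ _W ∈ q.coeff.support, (d + 1) := by
          apply Finset.sum_le_sum
          intro W hW
          calc (((W.toList.tails).map
                (FreeMonoid.ofList : List (Fin n) → FreeMonoid (Fin n))).toFinset).card
              ≤ ((W.toList.tails).map
                (FreeMonoid.ofList : List (Fin n) → FreeMonoid (Fin n))).length :=
                List.toFinset_card_le _
            _ = W.toList.length + 1 := by rw [List.length_map, List.length_tails]
            _ ≤ d + 1 := by
                have : W.toList.length ≤ d := Finset.le_sup hW
                omega
      _ = m * (d + 1) := by rw [Finset.sum_const, smul_eq_mul]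
  refine ⟨Fintype.card (St P), ?_, ?_, ?_⟩
  case _ =>
    simp only [St, Fintype.card_sum, Fintype.card_unit, Fintype.card_coe]
    omega
  case _ =>
    have hcard : Fintype.card (St P) = P.card + 2 := by
      simp only [St, Fintype.card_sum, Fintype.card_unit, Fintype.card_coe]
      omega
    rw [hcard]
    have hmd : 1 ≤ m * d := Nat.one_le_iff_ne_zero.mpr (by positivity)
    nlinarith [hPcard, hm1, hd1, hmd]
  case _ =>
    set N := Fintype.card (St P) with hNdef
    have hN2 : 2 ≤ N := by
      simp only [hNdef, St, Fintype.card_sum, Fintype.card_unit, Fintype.card_coe]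
      omega
    set s0 : St P := Sum.inl () with hs0def
    set t0 : St P := Sum.inr (Sum.inr ()) with ht0def
    have hst : s0 ≠ t0 := by simp [hs0def, ht0def]
    set i0 : Fin N := ⟨0, by omega⟩ with hi0def
    set i1 : Fin N := ⟨N - 1, by omega⟩ with hi1def
    have hi01 : i0 ≠ i1 := by
      simp only [hi0def, hi1def, ne_eq, Fin.mk.injEq]
      omega
    set e0 : St P ≃ Fin N := Fintype.equivFin (St P) with he0def
    set e1 : St P ≃ Fin N := e0.trans (Equiv.swap (e0 s0) i0) with he1def
    have he1s : e1 s0 = i0 := by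
      simp [he1def, Equiv.swap_apply_left]
    set e : St P ≃ Fin N := e1.trans (Equiv.swap (e1 t0) i1) with hedef
    have he1st : e1 s0 ≠ e1 t0 := fun h => hst (e1.injective h)
    have hes : e s0 = i0 := by
      simp only [hedef, Equiv.trans_apply, he1s]
      exact Equiv.swap_apply_of_ne_of_ne (fun h => he1st (he1s.trans h)) hi01
    have het : e t0 = i1 := by
      simp only [hedef, Equiv.trans_apply]
      exact Equiv.swap_apply_left _ _
    refine ⟨((Matrix.reindexAlgEquiv ℂ (Polynomial ℂ) e).toAlgHom.toRingHom.toMonoidHom).comp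
      (FreeMonoid.lift (Mx q P)), ?_⟩
    intro F hF
    have hFl : F.toList ≠ [] := by
      intro h
      apply hF
      have := congrArg FreeMonoid.ofList h
      rwa [ofList_toList] at this
    have key := row_eq q hqe P hP F.toList t0
    rw [ofList_toList] at key
    have hentry : ((Matrix.reindexAlgEquiv ℂ (Polynomial ℂ) e).toAlgHom.toRingHom.toMonoidHom).comp
        (FreeMonoid.lift (Mx q P)) F ⟨0, by omega⟩ ⟨N - 1, by omega⟩
        = (FreeMonoid.lift (Mx q P)) F s0 t0 := by
      show (Matrix.reindexAlgEquiv ℂ (Polynomial ℂ) e) ((FreeMonoid.lift (Mx q P)) F) i0 i1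
        = (FreeMonoid.lift (Mx q P)) F s0 t0
      rw [Matrix.reindexAlgEquiv_apply, Matrix.reindex_apply, Matrix.submatrix_apply]
      have h1 : e.symm i0 = s0 := by rw [Equiv.symm_apply_eq, hes]
      have h2 : e.symm i1 = t0 := by rw [Equiv.symm_apply_eq, het]
      rw [h1, h2]
    rw [hentry, key]
    simp only [VS, Tk, ht0def]
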